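/- arXiv:2301.02746 — 2 statements merged into one kernel-verified Lean document; each statement's English description precedes it below -/
import Mathlib

section
/- Suppose s = 1 and C₁, C₂ are complex numbers of modulus 1. For every (z₁,z₂) ∈ ℂ², the 4×4 matrix ℒ(z₁,z₂) is positive definite if and only if |z₁| + |z₂| < 1; equivalently, 𝔓[1] = {(z₁,z₂) ∈ ℂ² : |z₁| + |z₂| < 1}. -/
open scoped ComplexOrder Kronecker Matrix Matrix.Norms.L2Operator

noncomputable section

/-- Square complex matrices of size `n`. -/
abbrev Mat (n : ℕ) : Type := Matrix (Fin n) (Fin n) ℂ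

/-- Assemble a `k × k` array of matrices into a single block matrix. -/
def blockMat {k : ℕ} {α β : Type*} (M : Fin k → Fin k → Matrix α β ℂ) :
    Matrix (Fin k × α) (Fin k × β) ℂ :=
  Matrix.of fun p q => M p.1 q.1 p.2 q.2

/-- The pencil `ℒ(X)` whose positivity defines the free spectrahedron `𝔓`. -/
def scrL {s : ℕ} (C1 C2 : Matrix (Fin s) (Fin s) ℂ) {α : Type*} [DecidableEq α]
    (X : Matrix α α ℂ × Matrix α α ℂ) :
    Matrix (Fin 4 × (Fin s × α)) (Fin 4 × (Fin s × α)) ℂ :=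
  blockMat ![![1, C1 ⊗ₖ X.1, C2 ⊗ₖ X.2, 0],
             ![(C1 ⊗ₖ X.1)ᴴ, 1, 0, C2 ⊗ₖ X.2],
             ![(C2 ⊗ₖ X.2)ᴴ, 0, 1, C1 ⊗ₖ X.1],
             ![0, (C2 ⊗ₖ X.2)ᴴ, (C1 ⊗ₖ X.1)ᴴ, 1]]

/-- The free spectrahedron `𝔓` at level `n`. -/
def freeP {s : ℕ} (C1 C2 : Matrix (Fin s) (Fin s) ℂ) (n : ℕ) : Set (Mat n × Mat n) :=
  {X | (scrL C1 C2 X).PosDef}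

/-- `ℒ(z₁, z₂)` at level one, as a `4s × 4s` matrix. -/
def scrL1 {s : ℕ} (C1 C2 : Matrix (Fin s) (Fin s) ℂ) (z1 z2 : ℂ) :
    Matrix (Fin 4 × Fin s) (Fin 4 × Fin s) ℂ :=
  blockMat ![![1, z1 • C1, z2 • C2, 0],
             ![(z1 • C1)ᴴ, 1, 0, z2 • C2],
             ![(z2 • C2)ᴴ, 0, 1, z1 • C1],
             ![0, (z2 • C2)ᴴ, (z1 • C1)ᴴ, 1]]

/- ### Auxiliary machinery -/

lemma posDef_submatrix_equiv' {m n : Type*} [Fintype m] [Fintype n] [DecidableEq m]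
    [DecidableEq n] {M : Matrix n n ℂ} (e : m ≃ n) (hM : M.PosDef) :
    (M.submatrix e e).PosDef := by
  exact hM.submatrix e.injective

lemma posDef_submatrix_equiv_iff' {m n : Type*} [Fintype m] [Fintype n] [DecidableEq m]
    [DecidableEq n] {M : Matrix n n ℂ} (e : m ≃ n) : (M.submatrix e e).PosDef ↔ M.PosDef := by
  constructor
  · intro h
    have := posDef_submatrix_equiv' e.symm h
    simpa using this
  · exact posDef_submatrix_equiv' e

lemma cons_val_three' {α : Type*} {m : ℕ} (x : α) (u : Fin (m + 3) → α) :
    Matrix.vecCons x u 3 = Matrix.vecHead (Matrix.vecTail (Matrix.vecTail u)) := rfl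

/-- The scalar `4 × 4` pencil. -/
def L4 (y1 y2 : ℂ) : Matrix (Fin 4) (Fin 4) ℂ :=
  !![1, y1, y2, 0;
     starRingEnd ℂ y1, 1, 0, y2;
     starRingEnd ℂ y2, 0, 1, y1;
     0, starRingEnd ℂ y2, starRingEnd ℂ y1, 1]

lemma pair_eq (w a b : ℂ) :
    starRingEnd ℂ a * (w * b) + starRingEnd ℂ b * (starRingEnd ℂ w * a)
      = ((2 * (starRingEnd ℂ a * w * b).re : ℝ) : ℂ) := by
  rw [← Complex.add_conj]
  simp only [map_mul, Complex.conj_conj]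
  ring

set_option maxHeartbeats 1000000 in
lemma L4_posDef_of (y1 y2 : ℂ) (h : ‖y1‖ + ‖y2‖ < 1) :
    (L4 y1 y2).PosDef := by
  refine Matrix.PosDef.of_dotProduct_mulVec_pos ?_ ?_
  · ext i j
    fin_cases i <;> fin_cases j <;>
      simp [L4, Matrix.conjTranspose_apply]
  · intro x hx
    obtain ⟨a, b, c, d, ha, hb, hc, hd⟩ :
        ∃ a b c d : ℂ, x 0 = a ∧ x 1 = b ∧ x 2 = c ∧ x 3 = d := ⟨_, _, _, _, rfl, rfl, rfl, rfl⟩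
    have hQ : star x ⬝ᵥ (L4 y1 y2) *ᵥ x
        = ((Complex.normSq a + Complex.normSq b + Complex.normSq c + Complex.normSq d
            + 2 * (starRingEnd ℂ a * y1 * b).re + 2 * (starRingEnd ℂ a * y2 * c).re
            + 2 * (starRingEnd ℂ b * y2 * d).re + 2 * (starRingEnd ℂ c * y1 * d).re : ℝ) : ℂ) := by
      have n1 := Complex.normSq_eq_conj_mul_self (z := a)
      have n2 := Complex.normSq_eq_conj_mul_self (z := b)
      have n3 := Complex.normSq_eq_conj_mul_self (z := c)
      have n4 := Complex.normSq_eq_conj_mul_self (z := d)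
      have e1 := pair_eq y1 a b
      have e2 := pair_eq y2 a c
      have e3 := pair_eq y2 b d
      have e4 := pair_eq y1 c d
      simp only [L4, dotProduct, Matrix.mulVec, Fin.sum_univ_four, Pi.star_apply,
        Matrix.cons_val', Matrix.cons_val_zero, Matrix.cons_val_one, Matrix.head_cons,
        Matrix.empty_val', Matrix.cons_val_fin_one, Matrix.head_fin_const, Matrix.of_apply,
        Matrix.cons_val_two, cons_val_three', Matrix.head_cons, Matrix.tail_cons,
        RCLike.star_def]
      rw [ha, hb, hc, hd]
      push_cast at e1 e2 e3 e4 ⊢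
      linear_combination e1 + e2 + e3 + e4 - n1 - n2 - n3 - n4
    rw [hQ, Complex.zero_lt_real]
    set A := ‖a‖ with hA'; set B := ‖b‖; set C := ‖c‖
    set D := ‖d‖
    have hnA : Complex.normSq a = A ^ 2 := (Complex.sq_norm a).symm
    have hnB : Complex.normSq b = B ^ 2 := (Complex.sq_norm b).symm
    have hnC : Complex.normSq c = C ^ 2 := (Complex.sq_norm c).symm
    have hnD : Complex.normSq d = D ^ 2 := (Complex.sq_norm d).symm
    set r1 := ‖y1‖; set r2 := ‖y2‖
    have hr1 : 0 ≤ r1 := norm_nonneg _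
    have hr2 : 0 ≤ r2 := norm_nonneg _
    have ht1 : -(r1 * A * B) ≤ (starRingEnd ℂ a * y1 * b).re := by
      have h1 := neg_abs_le (starRingEnd ℂ a * y1 * b).re
      have h2 := Complex.abs_re_le_norm (starRingEnd ℂ a * y1 * b)
      simp only [norm_mul, Complex.norm_conj] at h2
      nlinarith [abs_nonneg (starRingEnd ℂ a * y1 * b).re]
    have ht2 : -(r2 * A * C) ≤ (starRingEnd ℂ a * y2 * c).re := by
      have h1 := neg_abs_le (starRingEnd ℂ a * y2 * c).re
      have h2 := Complex.abs_re_le_norm (starRingEnd ℂ a * y2 * c)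
      simp only [norm_mul, Complex.norm_conj] at h2
      nlinarith [abs_nonneg (starRingEnd ℂ a * y2 * c).re]
    have ht3 : -(r2 * B * D) ≤ (starRingEnd ℂ b * y2 * d).re := by
      have h1 := neg_abs_le (starRingEnd ℂ b * y2 * d).re
      have h2 := Complex.abs_re_le_norm (starRingEnd ℂ b * y2 * d)
      simp only [norm_mul, Complex.norm_conj] at h2
      nlinarith [abs_nonneg (starRingEnd ℂ b * y2 * d).re]
    have ht4 : -(r1 * C * D) ≤ (starRingEnd ℂ c * y1 * d).re := by
      have h1 := neg_abs_le (starRingEnd ℂ c * y1 * d).re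
      have h2 := Complex.abs_re_le_norm (starRingEnd ℂ c * y1 * d)
      simp only [norm_mul, Complex.norm_conj] at h2
      nlinarith [abs_nonneg (starRingEnd ℂ c * y1 * d).re]
    have hS : 0 < A ^ 2 + B ^ 2 + C ^ 2 + D ^ 2 := by
      obtain ⟨i, hi⟩ := Function.ne_iff.mp hx
      fin_cases i
      · nlinarith [norm_pos_iff.mpr (show a ≠ 0 from ha ▸ hi), sq_nonneg B, sq_nonneg C,
          sq_nonneg D]
      · nlinarith [norm_pos_iff.mpr (show b ≠ 0 from hb ▸ hi), sq_nonneg A, sq_nonneg C,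
          sq_nonneg D]
      · nlinarith [norm_pos_iff.mpr (show c ≠ 0 from hc ▸ hi), sq_nonneg A, sq_nonneg B,
          sq_nonneg D]
      · nlinarith [norm_pos_iff.mpr (show d ≠ 0 from hd ▸ hi), sq_nonneg A, sq_nonneg B,
          sq_nonneg C]
    rw [hnA, hnB, hnC, hnD]
    nlinarith [mul_nonneg hr1 (sq_nonneg (A - B)), mul_nonneg hr1 (sq_nonneg (C - D)),
      mul_nonneg hr2 (sq_nonneg (A - C)), mul_nonneg hr2 (sq_nonneg (B - D)),
      mul_pos (by linarith : (0:ℝ) < 1 - r1 - r2) hS]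

/-- phase factor: `|ph y| = 1` and `y * ph y = -|y|`. -/
def ph (y : ℂ) : ℂ := if y = 0 then 1 else -(starRingEnd ℂ y) / ((‖y‖ : ℝ) : ℂ)

lemma ph_mul (y : ℂ) : y * ph y = -(‖y‖ : ℂ) := by
  unfold ph
  by_cases h : y = 0
  · simp [h]
  · rw [if_neg h]
    have h1 : (‖y‖ : ℂ) ≠ 0 := by simpa using h
    field_simp
    rw [mul_comm y, ← Complex.normSq_eq_conj_mul_self, ← Complex.sq_norm]
    push_cast
    ring

lemma ph_conj_mul (y : ℂ) : starRingEnd ℂ (ph y) * ph y = 1 := by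
  rw [← Complex.normSq_eq_conj_mul_self, ← Complex.sq_norm]
  unfold ph
  by_cases h : y = 0
  · simp [h]
  · rw [if_neg h]
    have h1 : ‖y‖ ≠ 0 := by simpa using h
    simp [map_div₀, Complex.norm_real, abs_abs, div_self h1]

lemma L4_lt_of_posDef (y1 y2 : ℂ) (h : (L4 y1 y2).PosDef) :
    ‖y1‖ + ‖y2‖ < 1 := by
  have hm1 := ph_mul y1
  have hm2 := ph_mul y2
  have hu1 := ph_conj_mul y1
  have hu2 := ph_conj_mul y2
  have hc1 : starRingEnd ℂ y1 * starRingEnd ℂ (ph y1) = -(‖y1‖ : ℂ) := by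
    have := congrArg (starRingEnd ℂ) hm1
    simpa using this
  have hc2 : starRingEnd ℂ y2 * starRingEnd ℂ (ph y2) = -(‖y2‖ : ℂ) := by
    have := congrArg (starRingEnd ℂ) hm2
    simpa using this
  set x : Fin 4 → ℂ := ![1, ph y1, ph y2, ph y1 * ph y2] with hxdef
  have hx : x ≠ 0 := by
    intro h0
    have := congrFun h0 0
    simp [hxdef] at this
  have key := h.dotProduct_mulVec_pos hx
  have hQ : star x ⬝ᵥ (L4 y1 y2) *ᵥ x
      = ((4 - 4 * (‖y1‖ + ‖y2‖) : ℝ) : ℂ) := by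
    simp only [L4, hxdef, dotProduct, Matrix.mulVec, Fin.sum_univ_four, Pi.star_apply,
      Matrix.cons_val', Matrix.cons_val_zero, Matrix.cons_val_one, Matrix.head_cons,
      Matrix.empty_val', Matrix.cons_val_fin_one, Matrix.head_fin_const, Matrix.of_apply,
      Matrix.cons_val_two, cons_val_three', Matrix.tail_cons, RCLike.star_def, map_mul, map_one]
    push_cast
    linear_combination 2*hm1 + 2*hm2 + 2*hc1 + 2*hc2
      + (1 + y2 * ph y2 + starRingEnd ℂ y2 * starRingEnd ℂ (ph y2)
          + starRingEnd ℂ (ph y2) * ph y2) * hu1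
      + (1 + y1 * ph y1 + starRingEnd ℂ y1 * starRingEnd ℂ (ph y1)) * hu2 + hu2
  rw [hQ, Complex.zero_lt_real] at key
  linarith

lemma L4_posDef_iff (y1 y2 : ℂ) :
    (L4 y1 y2).PosDef ↔ ‖y1‖ + ‖y2‖ < 1 :=
  ⟨L4_lt_of_posDef y1 y2, L4_posDef_of y1 y2⟩

/- ### Identification of the pencils with `L4` -/

lemma scrL1_eq (c1 c2 z1 z2 : ℂ) :
    scrL1 (c1 • (1 : Matrix (Fin 1) (Fin 1) ℂ)) (c2 • (1 : Matrix (Fin 1) (Fin 1) ℂ)) z1 z2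
      = (L4 (z1 * c1) (z2 * c2)).submatrix
          (Equiv.prodUnique (Fin 4) (Fin 1)) (Equiv.prodUnique (Fin 4) (Fin 1)) := by
  ext ⟨i, a⟩ ⟨j, b⟩
  fin_cases a; fin_cases b
  fin_cases i <;> fin_cases j <;>
    simp only [Fin.reduceFinMk, scrL1, blockMat, L4, Matrix.of_apply, Matrix.submatrix_apply,
      Equiv.prodUnique_apply, Matrix.cons_val] <;>
    simp [scrL1, blockMat, L4, Matrix.conjTranspose_apply, Matrix.one_apply, mul_comm]

instance : Unique (Fin 1 × Fin 1) where
  default := (0, 0)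
  uniq := fun _ => Subsingleton.elim _ _

lemma scrL_eq (c1 c2 : ℂ) (X : Mat 1 × Mat 1) :
    scrL (c1 • (1 : Matrix (Fin 1) (Fin 1) ℂ)) (c2 • (1 : Matrix (Fin 1) (Fin 1) ℂ)) X
      = (L4 (X.1 0 0 * c1) (X.2 0 0 * c2)).submatrix
          (Equiv.prodUnique (Fin 4) (Fin 1 × Fin 1)) (Equiv.prodUnique (Fin 4) (Fin 1 × Fin 1)) := by
  ext ⟨i, a, a'⟩ ⟨j, b, b'⟩
  fin_cases a; fin_cases a'; fin_cases b; fin_cases b'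
  fin_cases i <;> fin_cases j <;>
    simp only [Fin.reduceFinMk, scrL, blockMat, L4, Matrix.of_apply, Matrix.submatrix_apply,
      Equiv.prodUnique_apply, Matrix.cons_val] <;>
    simp [scrL, blockMat, L4, Matrix.conjTranspose_apply, Matrix.one_apply,
      Matrix.kroneckerMap_apply, mul_comm]

/- ### Main theorem -/

/-- For `s = 1`, the level-one set `𝔓[1]` is the pseudo-ellipse
`{(z₁, z₂) : |z₁| + |z₂| < 1}`. -/
theorem P_level_one_is_pseudo_ellipse (c1 c2 : ℂ)
    (hc1 : ‖c1‖ = 1) (hc2 : ‖c2‖ = 1) :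
    (∀ z1 z2 : ℂ,
      (scrL1 (c1 • (1 : Matrix (Fin 1) (Fin 1) ℂ)) (c2 • (1 : Matrix (Fin 1) (Fin 1) ℂ))
          z1 z2).PosDef ↔ ‖z1‖ + ‖z2‖ < 1) ∧
    freeP (c1 • (1 : Matrix (Fin 1) (Fin 1) ℂ)) (c2 • (1 : Matrix (Fin 1) (Fin 1) ℂ)) 1 =
      {X : Mat 1 × Mat 1 | ‖X.1 0 0‖ + ‖X.2 0 0‖ < 1} := by
  constructor
  · intro z1 z2
    rw [scrL1_eq, posDef_submatrix_equiv_iff', L4_posDef_iff]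
    simp [norm_mul, hc1, hc2]
  · ext X
    show (scrL _ _ X).PosDef ↔ _
    rw [scrL_eq, posDef_submatrix_equiv_iff', L4_posDef_iff]
    simp [norm_mul, hc1, hc2]
end
end

section
/- Let G₁ be an a×b complex matrix and G₂ a b×c complex matrix, and let A₁, A₂ be the (a+b+c)×(a+b+c) block matrices A₁ = [[0,G₁,0],[0,0,0],[0,0,0]] and A₂ = [[0,0,0],[0,0,G₂],[0,0,0]]. If X = (X₁,X₂) ∈ D_A[n] and W₀, W₁, W₂ ∈ Mₙ(ℂ) are unitary, then (W₀*X₁W₁, W₁*X₂W₂) ∈ D_A[n]. -/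
open scoped ComplexOrder Kronecker Matrix Matrix.Norms.L2Operator

noncomputable section

/-- The pencil `L_A(X)` of the hyper-Reinhardt free spectrahedron determined by `G₁, G₂`. -/
def hrL {a b c n : ℕ} (G1 : Matrix (Fin a) (Fin b) ℂ) (G2 : Matrix (Fin b) (Fin c) ℂ)
    (X : Mat n × Mat n) :
    Matrix (((Fin a ⊕ Fin b) ⊕ Fin c) × Fin n) (((Fin a ⊕ Fin b) ⊕ Fin c) × Fin n) ℂ :=
  let A1 : Matrix ((Fin a ⊕ Fin b) ⊕ Fin c) ((Fin a ⊕ Fin b) ⊕ Fin c) ℂ :=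
    Matrix.fromBlocks (Matrix.fromBlocks 0 G1 0 0) 0 0 0
  let A2 : Matrix ((Fin a ⊕ Fin b) ⊕ Fin c) ((Fin a ⊕ Fin b) ⊕ Fin c) ℂ :=
    Matrix.fromBlocks 0 (Matrix.fromRows 0 G2) 0 0
  1 + A1 ⊗ₖ X.1 + A2 ⊗ₖ X.2 + A1ᴴ ⊗ₖ X.1ᴴ + A2ᴴ ⊗ₖ X.2ᴴ

lemma kron_conjT {α β γ δ : Type*} (A : Matrix α β ℂ) (B : Matrix γ δ ℂ) :
    (A ⊗ₖ B)ᴴ = Aᴴ ⊗ₖ Bᴴ := by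
  ext ⟨i, p⟩ ⟨j, q⟩
  simp [Matrix.conjTranspose_apply, mul_comm]

lemma posDef_conj {m : Type*} [Fintype m] [DecidableEq m] {M U : Matrix m m ℂ}
    (hM : M.PosDef) (hU : Uᴴ * U = 1) : (Uᴴ * M * U).PosDef := by
  refine Matrix.PosDef.of_dotProduct_mulVec_pos (Matrix.isHermitian_conjTranspose_mul_mul U hM.1) fun x hx => ?_
  have h1 : (Uᴴ * M * U) *ᵥ x = Uᴴ *ᵥ (M *ᵥ (U *ᵥ x)) := by
    simp [Matrix.mulVec_mulVec, Matrix.mul_assoc]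
  have h2 : star x ⬝ᵥ (Uᴴ * M * U) *ᵥ x = star (U *ᵥ x) ⬝ᵥ (M *ᵥ (U *ᵥ x)) := by
    rw [h1, Matrix.dotProduct_mulVec, Matrix.star_mulVec]
  rw [h2]
  refine hM.dotProduct_mulVec_pos fun h => hx ?_
  have := congrArg (Uᴴ *ᵥ ·) h
  simpa [Matrix.mulVec_mulVec, hU] using this

set_option maxHeartbeats 1000000 in
/-- A hyper-Reinhardt free spectrahedron is invariant under the twisted unitary action
`X ↦ (W₀* X₁ W₁, W₁* X₂ W₂)`. -/
theorem hyperReinhardt_unitary_invariance {a b c : ℕ}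
    (G1 : Matrix (Fin a) (Fin b) ℂ) (G2 : Matrix (Fin b) (Fin c) ℂ)
    {n : ℕ} (X : Mat n × Mat n) (hX : (hrL G1 G2 X).PosDef)
    (W0 W1 W2 : Mat n)
    (hW0 : W0 ∈ Matrix.unitaryGroup (Fin n) ℂ)
    (hW1 : W1 ∈ Matrix.unitaryGroup (Fin n) ℂ)
    (hW2 : W2 ∈ Matrix.unitaryGroup (Fin n) ℂ) :
    (hrL G1 G2 (W0ᴴ * X.1 * W1, W1ᴴ * X.2 * W2)).PosDef := by
  classical
  have hW0' : W0ᴴ * W0 = 1 := by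
    simpa [Matrix.star_eq_conjTranspose] using (Matrix.mem_unitaryGroup_iff'.mp hW0)
  have hW1' : W1ᴴ * W1 = 1 := by
    simpa [Matrix.star_eq_conjTranspose] using (Matrix.mem_unitaryGroup_iff'.mp hW1)
  have hW2' : W2ᴴ * W2 = 1 := by
    simpa [Matrix.star_eq_conjTranspose] using (Matrix.mem_unitaryGroup_iff'.mp hW2)
  set A1 : Matrix ((Fin a ⊕ Fin b) ⊕ Fin c) ((Fin a ⊕ Fin b) ⊕ Fin c) ℂ :=
    Matrix.fromBlocks (Matrix.fromBlocks 0 G1 0 0) 0 0 0 with hA1def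
  set A2 : Matrix ((Fin a ⊕ Fin b) ⊕ Fin c) ((Fin a ⊕ Fin b) ⊕ Fin c) ℂ :=
    Matrix.fromBlocks 0 (Matrix.fromRows 0 G2) 0 0 with hA2def
  set P1 : Matrix ((Fin a ⊕ Fin b) ⊕ Fin c) ((Fin a ⊕ Fin b) ⊕ Fin c) ℂ :=
    Matrix.fromBlocks (Matrix.fromBlocks 1 0 0 0) 0 0 0 with hP1def
  set P2 : Matrix ((Fin a ⊕ Fin b) ⊕ Fin c) ((Fin a ⊕ Fin b) ⊕ Fin c) ℂ :=
    Matrix.fromBlocks (Matrix.fromBlocks 0 0 0 1) 0 0 0 with hP2def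
  set P3 : Matrix ((Fin a ⊕ Fin b) ⊕ Fin c) ((Fin a ⊕ Fin b) ⊕ Fin c) ℂ :=
    Matrix.fromBlocks 0 0 0 1 with hP3def
  set U := P1 ⊗ₖ W0 + P2 ⊗ₖ W1 + P3 ⊗ₖ W2 with hUdef
  have hP1H : P1ᴴ = P1 := by simp [hP1def, Matrix.fromBlocks_conjTranspose]
  have hP2H : P2ᴴ = P2 := by simp [hP2def, Matrix.fromBlocks_conjTranspose]
  have hP3H : P3ᴴ = P3 := by simp [hP3def, Matrix.fromBlocks_conjTranspose]
  have hUH : Uᴴ = P1 ⊗ₖ W0ᴴ + P2 ⊗ₖ W1ᴴ + P3 ⊗ₖ W2ᴴ := by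
    simp [hUdef, kron_conjT, hP1H, hP2H, hP3H]
  have p11 : P1 * P1 = P1 := by simp [hP1def, Matrix.fromBlocks_multiply]
  have p12 : P1 * P2 = 0 := by simp [hP1def, hP2def, Matrix.fromBlocks_multiply]
  have p13 : P1 * P3 = 0 := by simp [hP1def, hP3def, Matrix.fromBlocks_multiply]
  have p21 : P2 * P1 = 0 := by simp [hP1def, hP2def, Matrix.fromBlocks_multiply]
  have p22 : P2 * P2 = P2 := by simp [hP2def, Matrix.fromBlocks_multiply]
  have p23 : P2 * P3 = 0 := by simp [hP2def, hP3def, Matrix.fromBlocks_multiply]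
  have p31 : P3 * P1 = 0 := by simp [hP1def, hP3def, Matrix.fromBlocks_multiply]
  have p32 : P3 * P2 = 0 := by simp [hP2def, hP3def, Matrix.fromBlocks_multiply]
  have p33 : P3 * P3 = P3 := by simp [hP3def, Matrix.fromBlocks_multiply]
  have psum : P1 + P2 + P3 = 1 := by
    rw [hP1def, hP2def, hP3def]
    simp [Matrix.fromBlocks_add, Matrix.fromBlocks_one]
  have a1l1 : P1 * A1 = A1 := by simp [hP1def, hA1def, Matrix.fromBlocks_multiply]
  have a1l2 : P2 * A1 = 0 := by simp [hP2def, hA1def, Matrix.fromBlocks_multiply]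
  have a1l3 : P3 * A1 = 0 := by simp [hP3def, hA1def, Matrix.fromBlocks_multiply]
  have a1r1 : A1 * P1 = 0 := by simp [hP1def, hA1def, Matrix.fromBlocks_multiply]
  have a1r2 : A1 * P2 = A1 := by simp [hP2def, hA1def, Matrix.fromBlocks_multiply]
  have a1r3 : A1 * P3 = 0 := by simp [hP3def, hA1def, Matrix.fromBlocks_multiply]
  have a2l1 : P1 * A2 = 0 := by
    simp [hP1def, hA2def, Matrix.fromBlocks_multiply, Matrix.fromBlocks_mul_fromRows]
  have a2l2 : P2 * A2 = A2 := by
    simp [hP2def, hA2def, Matrix.fromBlocks_multiply, Matrix.fromBlocks_mul_fromRows]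
  have a2l3 : P3 * A2 = 0 := by
    simp [hP3def, hA2def, Matrix.fromBlocks_multiply, Matrix.fromBlocks_mul_fromRows]
  have a2r1 : A2 * P1 = 0 := by
    simp [hP1def, hA2def, Matrix.fromBlocks_multiply]
  have a2r2 : A2 * P2 = 0 := by
    simp [hP2def, hA2def, Matrix.fromBlocks_multiply]
  have a2r3 : A2 * P3 = A2 := by
    simp [hP3def, hA2def, Matrix.fromBlocks_multiply]
  -- conjTranspose absorptions
  have b1l1 : P1 * A1ᴴ = 0 := by
    rw [← hP1H, ← Matrix.conjTranspose_mul, a1r1, Matrix.conjTranspose_zero]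
  have b1l2 : P2 * A1ᴴ = A1ᴴ := by
    rw [← hP2H, ← Matrix.conjTranspose_mul, a1r2]
  have b1l3 : P3 * A1ᴴ = 0 := by
    rw [← hP3H, ← Matrix.conjTranspose_mul, a1r3, Matrix.conjTranspose_zero]
  have b1r1 : A1ᴴ * P1 = A1ᴴ := by
    rw [← hP1H, ← Matrix.conjTranspose_mul, a1l1]
  have b1r2 : A1ᴴ * P2 = 0 := by
    rw [← hP2H, ← Matrix.conjTranspose_mul, a1l2, Matrix.conjTranspose_zero]
  have b1r3 : A1ᴴ * P3 = 0 := by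
    rw [← hP3H, ← Matrix.conjTranspose_mul, a1l3, Matrix.conjTranspose_zero]
  have b2l1 : P1 * A2ᴴ = 0 := by
    rw [← hP1H, ← Matrix.conjTranspose_mul, a2r1, Matrix.conjTranspose_zero]
  have b2l2 : P2 * A2ᴴ = 0 := by
    rw [← hP2H, ← Matrix.conjTranspose_mul, a2r2, Matrix.conjTranspose_zero]
  have b2l3 : P3 * A2ᴴ = A2ᴴ := by
    rw [← hP3H, ← Matrix.conjTranspose_mul, a2r3]
  have b2r1 : A2ᴴ * P1 = 0 := by
    rw [← hP1H, ← Matrix.conjTranspose_mul, a2l1, Matrix.conjTranspose_zero]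
  have b2r2 : A2ᴴ * P2 = A2ᴴ := by
    rw [← hP2H, ← Matrix.conjTranspose_mul, a2l2]
  have b2r3 : A2ᴴ * P3 = 0 := by
    rw [← hP3H, ← Matrix.conjTranspose_mul, a2l3, Matrix.conjTranspose_zero]
  -- unitarity of U
  have hU : Uᴴ * U = 1 := by
    rw [hUH, hUdef]
    simp only [Matrix.add_mul, Matrix.mul_add, ← Matrix.mul_kronecker_mul,
      p11, p12, p13, p21, p22, p23, p31, p32, p33, hW0', hW1', hW2',
      Matrix.zero_kronecker, add_zero, zero_add]
    rw [← Matrix.add_kronecker, ← Matrix.add_kronecker, psum, Matrix.one_kronecker_one]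
  -- conjugation of each Kronecker term
  have conj : ∀ (A : Matrix ((Fin a ⊕ Fin b) ⊕ Fin c) ((Fin a ⊕ Fin b) ⊕ Fin c) ℂ)
      (Y : Mat n), Uᴴ * (A ⊗ₖ Y) * U =
        (P1 * A * P1) ⊗ₖ (W0ᴴ * Y * W0) + (P1 * A * P2) ⊗ₖ (W0ᴴ * Y * W1)
        + (P1 * A * P3) ⊗ₖ (W0ᴴ * Y * W2)
        + ((P2 * A * P1) ⊗ₖ (W1ᴴ * Y * W0) + (P2 * A * P2) ⊗ₖ (W1ᴴ * Y * W1)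
        + (P2 * A * P3) ⊗ₖ (W1ᴴ * Y * W2))
        + ((P3 * A * P1) ⊗ₖ (W2ᴴ * Y * W0) + (P3 * A * P2) ⊗ₖ (W2ᴴ * Y * W1)
        + (P3 * A * P3) ⊗ₖ (W2ᴴ * Y * W2)) := by
    intro A Y
    rw [hUH, hUdef]
    simp only [Matrix.add_mul, Matrix.mul_add, ← Matrix.mul_kronecker_mul]
    abel
  have c1 : Uᴴ * (A1 ⊗ₖ X.1) * U = A1 ⊗ₖ (W0ᴴ * X.1 * W1) := by
    rw [conj]
    simp only [a1l1, a1l2, a1l3, a1r1, a1r2, a1r3, Matrix.zero_mul,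
      Matrix.zero_kronecker, add_zero, zero_add]
  have c2 : Uᴴ * (A2 ⊗ₖ X.2) * U = A2 ⊗ₖ (W1ᴴ * X.2 * W2) := by
    rw [conj]
    simp only [a2l1, a2l2, a2l3, a2r1, a2r2, a2r3, Matrix.zero_mul,
      Matrix.zero_kronecker, add_zero, zero_add]
  have c3 : Uᴴ * (A1ᴴ ⊗ₖ X.1ᴴ) * U = A1ᴴ ⊗ₖ (W1ᴴ * X.1ᴴ * W0) := by
    rw [conj]
    simp only [b1l1, b1l2, b1l3, b1r1, b1r2, b1r3, Matrix.zero_mul,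
      Matrix.zero_kronecker, add_zero, zero_add]
  have c4 : Uᴴ * (A2ᴴ ⊗ₖ X.2ᴴ) * U = A2ᴴ ⊗ₖ (W2ᴴ * X.2ᴴ * W1) := by
    rw [conj]
    simp only [b2l1, b2l2, b2l3, b2r1, b2r2, b2r3, Matrix.zero_mul,
      Matrix.zero_kronecker, add_zero, zero_add]
  have key : hrL G1 G2 (W0ᴴ * X.1 * W1, W1ᴴ * X.2 * W2) = Uᴴ * hrL G1 G2 X * U := by
    show (1 : Matrix _ _ ℂ) + A1 ⊗ₖ (W0ᴴ * X.1 * W1) + A2 ⊗ₖ (W1ᴴ * X.2 * W2)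
        + A1ᴴ ⊗ₖ (W0ᴴ * X.1 * W1)ᴴ + A2ᴴ ⊗ₖ (W1ᴴ * X.2 * W2)ᴴ
        = Uᴴ * (1 + A1 ⊗ₖ X.1 + A2 ⊗ₖ X.2 + A1ᴴ ⊗ₖ X.1ᴴ + A2ᴴ ⊗ₖ X.2ᴴ) * U
    simp only [Matrix.mul_add, Matrix.add_mul, Matrix.mul_one, hU, c1, c2, c3, c4]
    simp [Matrix.conjTranspose_mul, Matrix.mul_assoc]
  rw [key]
  exact posDef_conj hX hU
end
end
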